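/- Let Δ be a linearly ordered abelian group (written additively), Γ a subgroup of Δ, q a prime, and δ ∈ Δ with γ := q·δ ∈ Γ. Suppose Δ is generated as a group by Γ ∪ {δ}. Let ε ∈ Γ be the least positive element of Γ (that is, ε > 0 and every x ∈ Γ with x > 0 satisfies x ≥ ε). Assume that for every integer j with 0 ≤ j < q, the element γ + j·ε is not divisible by q in Γ (i.e., there is no θ ∈ Γ with q·θ = γ + j·ε). Then there is no d ∈ Δ with 0 < d < ε; that is, ε is also the least positive element of Δ. -/

import Mathlib

lemma stmt8_disc {Δ : Type*} [AddCommGroup Δ] [LinearOrder Δ] [IsOrderedAddMonoid Δ]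
    (Γ : AddSubgroup Δ) (ε : Δ) (hεΓ : ε ∈ Γ) (hεpos : 0 < ε)
    (hεleast : ∀ x ∈ Γ, 0 < x → ε ≤ x) :
    ∀ k : ℕ, ∀ x ∈ Γ, 0 < x → x < k • ε → ∃ j : ℕ, j < k ∧ x = j • ε := by
  intro k
  induction k with
  | zero =>
    intro x hx hx0 hxk
    simp only [zero_nsmul] at hxk
    exact absurd (hx0.trans hxk) (lt_irrefl 0)
  | succ k ih =>
    intro x hx hx0 hxk
    have hεx := hεleast x hx hx0
    rcases eq_or_lt_of_le hεx with h | h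
    · refine ⟨1, ?_, by simp [← h]⟩
      have h1 : 1 • ε < (k+1) • ε := by rw [one_nsmul]; exact h.trans_lt hxk
      exact (nsmul_lt_nsmul_iff_left hεpos).mp h1
    · have hsub : x - ε ∈ Γ := sub_mem hx hεΓ
      have hsub0 : 0 < x - ε := sub_pos.mpr h
      have hsubk : x - ε < k • ε := by
        rw [succ_nsmul] at hxk
        exact sub_lt_iff_lt_add.mpr hxk
      obtain ⟨j, hj, hje⟩ := ih (x - ε) hsub hsub0 hsubk
      refine ⟨j + 1, by omega, ?_⟩
      rw [succ_nsmul, ← hje]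
      abel

/-- Let `Δ` be a linearly ordered abelian group, `Γ` a subgroup, `q` a prime, and
`δ ∈ Δ` with `γ := q • δ ∈ Γ`. Suppose `Δ` is generated by `Γ ∪ {δ}`. Let `ε` be
the least positive element of `Γ`. If for every `0 ≤ j < q` the element
`γ + j • ε` is not divisible by `q` in `Γ`, then there is no `d ∈ Δ` with
`0 < d < ε`; that is, `ε` is also the least positive element of `Δ`. -/
theorem stmt8 {Δ : Type*} [AddCommGroup Δ] [LinearOrder Δ] [IsOrderedAddMonoid Δ]
    (Γ : AddSubgroup Δ) (q : ℕ) (hq : q.Prime) (δ : Δ)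
    (hγ : q • δ ∈ Γ)
    (hgen : AddSubgroup.closure (↑Γ ∪ {δ}) = ⊤)
    (ε : Δ) (hεΓ : ε ∈ Γ) (hεpos : 0 < ε)
    (hεleast : ∀ x ∈ Γ, 0 < x → ε ≤ x)
    (hnodiv : ∀ j : ℕ, j < q → ¬∃ θ ∈ Γ, q • θ = q • δ + j • ε) :
    ¬∃ d : Δ, 0 < d ∧ d < ε := by
  rintro ⟨d, hd0, hdε⟩
  set γ : Δ := q • δ with hγdef
  -- decompose d
  obtain ⟨g, hg, n, hd⟩ : ∃ g ∈ Γ, ∃ n : ℤ, d = g + n • δ := by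
    have hx : d ∈ AddSubgroup.closure (↑Γ ∪ {δ}) := by rw [hgen]; trivial
    rw [AddSubgroup.closure_union, AddSubgroup.closure_eq, AddSubgroup.mem_sup] at hx
    obtain ⟨a, ha, b, hb, hab⟩ := hx
    rw [AddSubgroup.mem_closure_singleton] at hb
    obtain ⟨m, rfl⟩ := hb
    exact ⟨a, ha, m, hab.symm⟩
  have hqz : (0:ℤ) < (q:ℤ) := by exact_mod_cast hq.pos
  -- q • d ∈ Γ and equals j • ε
  have hqd : (q:ℤ) • d = (q:ℤ) • g + n • γ := by
    rw [hd, smul_add, smul_comm]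
    congr 1
    rw [hγdef, natCast_zsmul]
  have hqdΓ : (q:ℤ) • d ∈ Γ := by
    rw [hqd]; exact add_mem (zsmul_mem hg _) (zsmul_mem hγ _)
  have hqd0 : 0 < (q:ℤ) • d := smul_pos hqz hd0
  have hqdlt : (q:ℤ) • d < q • ε := by
    rw [← natCast_zsmul ε q]
    exact smul_lt_smul_of_pos_left hdε hqz
  obtain ⟨j, hjq, hje⟩ := stmt8_disc Γ ε hεΓ hεpos hεleast q ((q:ℤ) • d) hqdΓ hqd0 hqdlt
  by_cases hdvd : (q:ℤ) ∣ n
  · -- then d ∈ Γ, contradiction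
    obtain ⟨m, rfl⟩ := hdvd
    have : (q:ℤ) • d = (q:ℤ) • (g + m • γ) := by
      rw [hqd, smul_add, mul_smul]
    have hdΓ : d = g + m • γ := zsmul_right_injective (by positivity) this
    have : d ∈ Γ := hdΓ ▸ add_mem hg (zsmul_mem hγ _)
    exact absurd (hεleast d this hd0) (not_le.mpr hdε)
  · -- coprime case
    have hqp : Prime (q:ℤ) := Nat.prime_iff_prime_int.mp hq
    have hcop : IsCoprime (q:ℤ) n := (hqp.coprime_iff_not_dvd).mpr hdvd
    obtain ⟨v, u, huv⟩ := hcop  -- v*q + u*n = 1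
    have hje' : (q:ℤ) • d = (j:ℤ) • ε := by rw [hje, natCast_zsmul]
    have hnγ : n • γ = (j:ℤ) • ε - (q:ℤ) • g := by
      rw [← hje', hqd]; abel
    have key : γ = (u * j) • ε + (q:ℤ) • (v • γ - u • g) := by
      calc γ = (v * q + u * n) • γ := by rw [huv, one_smul]
        _ = (q:ℤ) • (v • γ) + u • (n • γ) := by
            rw [add_smul, mul_smul, mul_smul, smul_comm v]
        _ = (u * j) • ε + (q:ℤ) • (v • γ - u • g) := by
            rw [hnγ, mul_smul, smul_sub, smul_sub, smul_comm u (q:ℤ) g]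
            abel
    set r : ℤ := (-(u * j)) % (q:ℤ) with hr
    have hr0 : 0 ≤ r := Int.emod_nonneg _ (by omega)
    have hrq : r < q := Int.emod_lt_of_pos _ hqz
    set t : ℤ := (-(u * j)) / (q:ℤ) with ht
    have hrt : -(u * j) = (q:ℤ) * t + r := (Int.mul_ediv_add_emod _ _).symm
    set j' : ℕ := r.toNat with hj'
    have hj'q : j' < q := by omega
    refine hnodiv j' hj'q ⟨v • γ - u • g - t • ε, ?_, ?_⟩
    · exact sub_mem (sub_mem (zsmul_mem hγ _) (zsmul_mem hg _)) (zsmul_mem hεΓ _)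
    · rw [← natCast_zsmul, ← natCast_zsmul ε j']
      have hjr : (j' : ℤ) = r := Int.toNat_of_nonneg hr0
      rw [hjr]
      have h1 : (q:ℤ) • (v • γ - u • g) = γ - (u * (j:ℤ)) • ε := eq_sub_of_add_eq' key.symm
      have hre : r = -(u * (j:ℤ)) - (q:ℤ) * t := by omega
      calc (q:ℤ) • (v • γ - u • g - t • ε)
          = (q:ℤ) • (v • γ - u • g) - ((q:ℤ) * t) • ε := by
            rw [smul_sub, mul_smul]
        _ = γ - (u * (j:ℤ)) • ε - ((q:ℤ) * t) • ε := by rw [h1]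
        _ = γ + r • ε := by rw [hre, sub_smul, neg_smul]; abel
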